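/- The average value ζ̃, defined on 1-convex-extendable minimal incomplete games by ζ̃_i(v) = v({i}) + Δ/n, is the unique function f from the class of 1-convex-extendable minimal incomplete games on N to ℝ^n satisfying, for all such games v, w: (1) efficiency: Σ_{i∈N} f_i(v) = v(N); (2) symmetry of ṽ: for all i, j ∈ N and all S ⊆ N∖{i,j}, ṽ(S∪{i}) = ṽ(S∪{j}) implies f_i(v) = f_j(v); (3) null player of ṽ: for i ∈ N, if ṽ(S) = ṽ(S∪{i}) for all S ⊆ N∖{i}, then f_i(v) = 0; (4) additivity: f(v + w) = f(v) + f(w), where v + w is the minimal incomplete game with pointwise-summed values. -/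

import Mathlib

noncomputable section

open Finset

/-- The upper (utopia) vector `b^w` of a cooperative game `w` on `N = {1,…,n}`. -/
def bvec (n : ℕ) (w : Finset (Fin n) → ℝ) (i : Fin n) : ℝ :=
  w Finset.univ - w (Finset.univ \ {i})

/-- A cooperative game `w` is 1-convex: for every nonempty coalition `S`,
`w S ≤ w N - b^w(N \ S)`, and `b^w(N) ≥ w N`. -/
def OneConvex (n : ℕ) (w : Finset (Fin n) → ℝ) : Prop :=
  (∀ S : Finset (Fin n), S.Nonempty →
      w S ≤ w Finset.univ - ∑ i ∈ Finset.univ \ S, bvec n w i) ∧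
  w Finset.univ ≤ ∑ i : Fin n, bvec n w i

/-- The set of 1-convex extensions of an incomplete game `(N, K, v)`:
cooperative games (`w ∅ = 0`) that are 1-convex and agree with `v` on `K`. -/
def Cext (n : ℕ) (K : Finset (Finset (Fin n))) (v : Finset (Fin n) → ℝ) :
    Set (Finset (Fin n) → ℝ) :=
  {w | w ∅ = 0 ∧ OneConvex n w ∧ ∀ S ∈ K, w S = v S}

/-- `K_min`: the empty coalition, the grand coalition and all singletons. -/
def KminF (n : ℕ) : Finset (Finset (Fin n)) :=
  {∅, Finset.univ} ∪ Finset.univ.image (fun i => ({i} : Finset (Fin n)))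

/-- The total excess `Δ = v(N) - ∑_{i ∈ N} v({i})`. -/
def totalExcess (n : ℕ) (v : Finset (Fin n) → ℝ) : ℝ :=
  v Finset.univ - ∑ i : Fin n, v {i}

/-- A minimal incomplete game (only the values on `K_min` are relevant) that is
1-convex-extendable, i.e. `v ∅ = 0` and `Δ ≥ 0`. -/
def MinExtendable (n : ℕ) (v : Finset (Fin n) → ℝ) : Prop :=
  v ∅ = 0 ∧ 0 ≤ totalExcess n v

/-- The extreme games `v^i` of the set of 1-convex extensions of a minimal
incomplete game. -/
def extGame (n : ℕ) (v : Finset (Fin n) → ℝ) (i : Fin n) (S : Finset (Fin n)) : ℝ :=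
  if S ∈ KminF n then v S
  else if i ∈ S then v Finset.univ - ∑ j ∈ Finset.univ \ S, v {j}
  else v Finset.univ - ∑ j ∈ Finset.univ \ S, v {j} - totalExcess n v

/-- The upper game of the set of 1-convex extensions of a minimal incomplete game. -/
def upperGameMin (n : ℕ) (v : Finset (Fin n) → ℝ) (S : Finset (Fin n)) : ℝ :=
  if S ∈ KminF n then v S else v Finset.univ - ∑ i ∈ Finset.univ \ S, v {i}

/-- The index set `E = 2^N \ ({∅, N} ∪ {{i}} ∪ {N \ {i}})` of extreme rays. -/
def ESetMin (n : ℕ) : Finset (Finset (Fin n)) :=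
  Finset.univ \
    (KminF n ∪ Finset.univ.image (fun i => Finset.univ \ ({i} : Finset (Fin n))))

/-- The extreme-ray game `e_T`: value `-1` on `T` and `0` elsewhere. -/
def eRay (n : ℕ) (T S : Finset (Fin n)) : ℝ := if S = T then -1 else 0

/-- The centre of gravity `ṽ = (1/n) ∑_i v^i` of the extreme games. -/
def tildeV (n : ℕ) (v : Finset (Fin n) → ℝ) (S : Finset (Fin n)) : ℝ :=
  (∑ i : Fin n, extGame n v i S) / (n : ℝ)

/-- The centre of gravity `ẽ = (1/|E|) ∑_{T ∈ E} e_T` of the extreme rays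
(minimal incomplete case). -/
def tildeEMin (n : ℕ) (S : Finset (Fin n)) : ℝ :=
  (∑ T ∈ ESetMin n, eRay n T S) / ((ESetMin n).card : ℝ)

/-- The gap function `g^w(S) = b^w(S) - w(S)`. -/
def gapF (n : ℕ) (w : Finset (Fin n) → ℝ) (S : Finset (Fin n)) : ℝ :=
  (∑ i ∈ S, bvec n w i) - w S

/-- The τ-value of a 1-convex game: `τ_i(w) = b^w_i - g^w(N)/n`. -/
def tauVal (n : ℕ) (w : Finset (Fin n) → ℝ) (i : Fin n) : ℝ :=
  bvec n w i - gapF n w Finset.univ / (n : ℝ)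

/-- The Shapley value. -/
def shapley (n : ℕ) (w : Finset (Fin n) → ℝ) (i : Fin n) : ℝ :=
  ∑ S ∈ Finset.univ.filter (fun S : Finset (Fin n) => i ∈ S),
    ((Nat.factorial (S.card - 1) * Nat.factorial (n - S.card) : ℕ) : ℝ) /
        (Nat.factorial n : ℝ) * (w S - w (S \ {i}))

/-- The concession vector `λ^w_i = min_{S ∋ i} g^w(S)`. -/
def concession (n : ℕ) (w : Finset (Fin n) → ℝ) (i : Fin n) : ℝ :=
  (Finset.univ.filter (fun S : Finset (Fin n) => i ∈ S)).inf'
    ⟨{i}, by simp⟩ (gapF n w)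

/-- The minimal right vector `a^w = b^w - λ^w`. -/
def minRight (n : ℕ) (w : Finset (Fin n) → ℝ) (i : Fin n) : ℝ :=
  bvec n w i - concession n w i

/-- The average value `ζ̃_i(v) = v({i}) + Δ/n` of a minimal incomplete game. -/
def avgValue (n : ℕ) (v : Finset (Fin n) → ℝ) (i : Fin n) : ℝ :=
  v {i} + totalExcess n v / (n : ℝ)

/-- The zero-normalised game of a minimal incomplete game: value `Δ` on the
grand coalition and `0` on all other coalitions. -/
def zeroNorm (n : ℕ) (v : Finset (Fin n) → ℝ) (S : Finset (Fin n)) : ℝ :=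
  if S = Finset.univ then totalExcess n v else 0

/-- The upper game `v̄` for incomplete games with defined upper vector. -/
def upperGameK (n : ℕ) (K : Finset (Finset (Fin n))) (v : Finset (Fin n) → ℝ)
    (S : Finset (Fin n)) : ℝ :=
  if S ∈ K then v S else v Finset.univ - ∑ i ∈ Finset.univ \ S, bvec n v i

/-- The centre of gravity `ẽ = (1/|E|) ∑_{T ∉ K} e_T` of the extreme rays
(defined upper vector case), where `E = 2^N \ K`. -/
def tildeEK (n : ℕ) (K : Finset (Finset (Fin n))) (S : Finset (Fin n)) : ℝ :=
  (∑ T ∈ Finset.univ \ K, eRay n T S) / (((Finset.univ \ K).card : ℝ))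

/-- The axioms of Theorem `thm:axiom-known-shapley`: efficiency, symmetry of
`ṽ`, null player of `ṽ`, and additivity. -/
def ShapleyAxioms (n : ℕ) (f : (Finset (Fin n) → ℝ) → Fin n → ℝ) : Prop :=
  (∀ v, MinExtendable n v → ∑ i : Fin n, f v i = v Finset.univ) ∧
  (∀ v, MinExtendable n v → ∀ i j : Fin n, ∀ S : Finset (Fin n),
    S ⊆ Finset.univ \ {i, j} →
    tildeV n v (insert i S) = tildeV n v (insert j S) → f v i = f v j) ∧
  (∀ v, MinExtendable n v → ∀ i : Fin n,
    (∀ S : Finset (Fin n), S ⊆ Finset.univ \ {i} →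
      tildeV n v S = tildeV n v (insert i S)) → f v i = 0) ∧
  (∀ v w, MinExtendable n v → MinExtendable n w → f (v + w) = f v + f w)


section Helpers

variable {n : ℕ}

lemma mem_KminF {S : Finset (Fin n)} :
    S ∈ KminF n ↔ S = ∅ ∨ S = Finset.univ ∨ ∃ i, S = {i} := by
  simp [KminF, eq_comm]

lemma tildeV_mem (hn : 0 < n) (v : Finset (Fin n) → ℝ) {S : Finset (Fin n)}
    (hS : S ∈ KminF n) : tildeV n v S = v S := by
  have hn' : (n : ℝ) ≠ 0 := Nat.cast_ne_zero.mpr hn.ne'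
  simp only [tildeV, extGame, hS, if_pos, Finset.sum_const, Finset.card_univ,
    Fintype.card_fin, nsmul_eq_mul]
  field_simp

lemma tildeV_not_mem (hn : 0 < n) (v : Finset (Fin n) → ℝ) {S : Finset (Fin n)}
    (hS : S ∉ KminF n) :
    tildeV n v S = (v Finset.univ - ∑ j ∈ Finset.univ \ S, v {j})
      - ((n : ℝ) - S.card) / n * totalExcess n v := by
  have hn' : (n : ℝ) ≠ 0 := Nat.cast_ne_zero.mpr hn.ne'
  have hcard : ((Finset.univ \ S).card : ℝ) = (n : ℝ) - S.card := by
    rw [Finset.card_sdiff_of_subset (Finset.subset_univ S), Finset.card_univ, Fintype.card_fin,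
      Nat.cast_sub (le_trans (Finset.card_le_univ S) (by simp))]
  unfold tildeV extGame
  simp only [if_neg hS]
  rw [Finset.sum_ite, Finset.sum_const, Finset.sum_const]
  have h1 : (Finset.univ.filter (fun i : Fin n => i ∈ S)) = S := by
    ext x; simp
  have h2 : (Finset.univ.filter (fun i : Fin n => i ∉ S)) = Finset.univ \ S := by
    ext x; simp
  rw [h1, h2]
  have hcard2 : (S.card : ℝ) + ((Finset.univ \ S).card : ℝ) = n := by
    rw [hcard]; ring
  field_simp
  rw [nsmul_eq_mul, nsmul_eq_mul, hcard]
  ring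

lemma not_mem_KminF {S : Finset (Fin n)} {j : Fin n} (h1 : 1 < S.card) (hj : j ∉ S) :
    S ∉ KminF n := by
  rw [mem_KminF]
  push_neg
  refine ⟨?_, ?_, ?_⟩
  · exact Finset.card_pos.mp (by omega)
  · rintro rfl; exact hj (Finset.mem_univ j)
  · intro i hi; rw [hi] at h1; simp at h1

lemma totalExcess_add (v w : Finset (Fin n) → ℝ) :
    totalExcess n (v + w) = totalExcess n v + totalExcess n w := by
  simp only [totalExcess, Pi.add_apply, Finset.sum_add_distrib]
  ring

lemma insert_empty_eq' (i : Fin n) : insert i (∅ : Finset (Fin n)) = {i} := by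
  rfl

lemma empty_mem_KminF : (∅ : Finset (Fin n)) ∈ KminF n := mem_KminF.mpr (Or.inl rfl)

lemma univ_mem_KminF : (Finset.univ : Finset (Fin n)) ∈ KminF n :=
  mem_KminF.mpr (Or.inr (Or.inl rfl))

lemma singleton_mem_KminF (i : Fin n) : ({i} : Finset (Fin n)) ∈ KminF n :=
  mem_KminF.mpr (Or.inr (Or.inr ⟨i, rfl⟩))

end Helpers

/-- the average value `ζ̃_i(v) = v({i}) + Δ/n` is the unique value
on 1-convex-extendable minimal incomplete games satisfying efficiency, symmetry
of `ṽ`, null player of `ṽ` and additivity. -/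
theorem stmt_10 (n : ℕ) (hn : 0 < n) :
    ShapleyAxioms n (avgValue n) ∧
    ∀ f : (Finset (Fin n) → ℝ) → Fin n → ℝ, ShapleyAxioms n f →
      ∀ v, MinExtendable n v → ∀ i : Fin n, f v i = avgValue n v i := by
  have hn' : (n : ℝ) ≠ 0 := Nat.cast_ne_zero.mpr hn.ne'
  constructor
  · refine ⟨?_, ?_, ?_, ?_⟩
    · -- efficiency
      intro v hv
      unfold avgValue totalExcess
      rw [Finset.sum_add_distrib, Finset.sum_const, Finset.card_univ, Fintype.card_fin,
        nsmul_eq_mul]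
      field_simp
      ring
    · -- symmetry
      intro v hv i j S hS htil
      rcases eq_or_ne i j with rfl | hij
      · rfl
      have hiS : i ∉ S := fun h => by simpa using hS h
      have hjS : j ∉ S := fun h => by simpa using hS h
      suffices hvij : v {i} = v {j} by simp [avgValue, hvij]
      rcases S.eq_empty_or_nonempty with rfl | hSne
      · rw [insert_empty_eq', insert_empty_eq', tildeV_mem hn v (singleton_mem_KminF i),
          tildeV_mem hn v (singleton_mem_KminF j)] at htil
        exact htil
      · have hcardi : 1 < (insert i S).card := by
          rw [Finset.card_insert_of_notMem hiS]
          have := Finset.card_pos.mpr hSne; omega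
        have hcardj : 1 < (insert j S).card := by
          rw [Finset.card_insert_of_notMem hjS]
          have := Finset.card_pos.mpr hSne; omega
        have hji : j ∉ insert i S := by simp [hij.symm, hjS]
        have hij' : i ∉ insert j S := by simp [hij, hiS]
        have hci : insert i S ∉ KminF n := not_mem_KminF hcardi hji
        have hcj : insert j S ∉ KminF n := not_mem_KminF hcardj hij'
        rw [tildeV_not_mem hn v hci, tildeV_not_mem hn v hcj] at htil
        have hcard_eq : (insert i S).card = (insert j S).card := by
          rw [Finset.card_insert_of_notMem hiS, Finset.card_insert_of_notMem hjS]
        have hsumi : ∑ k ∈ Finset.univ \ insert i S, v {k}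
            = (∑ k ∈ Finset.univ \ S, v {k}) - v {i} := by
          rw [Finset.sdiff_insert, Finset.sum_erase_eq_sub (by simp [hiS])]
        have hsumj : ∑ k ∈ Finset.univ \ insert j S, v {k}
            = (∑ k ∈ Finset.univ \ S, v {k}) - v {j} := by
          rw [Finset.sdiff_insert, Finset.sum_erase_eq_sub (by simp [hjS])]
        rw [hsumi, hsumj, hcard_eq] at htil
        linarith
    · -- null player
      intro v hv i hnull
      have hv0 : v ∅ = 0 := hv.1
      have hvi : v {i} = 0 := by
        have h0 := hnull ∅ (Finset.empty_subset _)
        rw [tildeV_mem hn v empty_mem_KminF, insert_empty_eq',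
          tildeV_mem hn v (singleton_mem_KminF i), hv0] at h0
        exact h0.symm
      rcases lt_or_ge n 3 with h3 | h3
      · -- n = 1 or n = 2
        interval_cases n
        · -- n = 1
          have hi : i = 0 := Subsingleton.elim i 0
          subst hi
          have huniv : (Finset.univ : Finset (Fin 1)) = {0} := by decide
          simp [avgValue, totalExcess, huniv, Fin.sum_univ_one, hvi]
        · -- n = 2
          set j : Fin 2 := i + 1 with hj
          have hij : i ≠ j := by
            have : ∀ k : Fin 2, k ≠ k + 1 := by decide
            exact this i
          have huniv2 : ({i, j} : Finset (Fin 2)) = Finset.univ := by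
            have : ∀ k : Fin 2, ({k, k + 1} : Finset (Fin 2)) = Finset.univ := by decide
            exact this i
          have hvj : v {j} = v Finset.univ := by
            have h1 := hnull {j} (by simp [Finset.singleton_subset_iff, hij.symm])
            rw [tildeV_mem hn v (singleton_mem_KminF j)] at h1
            have hins : insert i ({j} : Finset (Fin 2)) = Finset.univ := huniv2
            rw [hins, tildeV_mem hn v univ_mem_KminF] at h1
            exact h1
          have hsum : ∑ k : Fin 2, v {k} = v {i} + v {j} := by
            rw [← huniv2, Finset.sum_insert (by simp [hij]), Finset.sum_singleton]
          simp only [avgValue, totalExcess, hsum, hvi, hvj]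
          norm_num
      · -- n ≥ 3
        set S : Finset (Fin n) := Finset.univ \ {i} with hSdef
        have hiS : i ∉ S := by simp [hSdef]
        have hins : insert i S = Finset.univ := by
          rw [hSdef, ← Finset.erase_eq, Finset.insert_erase (Finset.mem_univ i)]
        have hScard : S.card = n - 1 := by
          rw [hSdef, Finset.card_sdiff_of_subset (by simp), Finset.card_univ, Fintype.card_fin,
            Finset.card_singleton]
        have hSK : S ∉ KminF n := not_mem_KminF (by omega) hiS
        have hcompl : Finset.univ \ S = {i} := by
          rw [hSdef, Finset.sdiff_sdiff_self_left, Finset.univ_inter]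
        have h0 := hnull S (by rw [hSdef])
        rw [hins, tildeV_mem hn v univ_mem_KminF, tildeV_not_mem hn v hSK, hcompl,
          Finset.sum_singleton, hvi, hScard] at h0
        have hc : ((n : ℝ) - ((n - 1 : ℕ) : ℝ)) = 1 := by
          rw [Nat.cast_sub hn]; push_cast; ring
        rw [hc] at h0
        have : totalExcess n v / n = 0 := by
          have h1 : 1 / (n : ℝ) * totalExcess n v = totalExcess n v / n := by ring
          linarith [h0, h1.symm ▸ h0]
        simp [avgValue, hvi, this]
    · -- additivity
      intro v w hv hw
      funext i
      simp only [avgValue, totalExcess, Pi.add_apply, Finset.sum_add_distrib]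
      ring
  · -- uniqueness
    intro f hf v hv i
    obtain ⟨heff, hsym, hnullax, hadd⟩ := hf
    have hMadd : ∀ v w, MinExtendable n v → MinExtendable n w → MinExtendable n (v + w) := by
      intro v w hv hw
      refine ⟨by simp [Pi.add_apply, hv.1, hw.1], ?_⟩
      rw [totalExcess_add]
      linarith [hv.2, hw.2]
    have hM0 : MinExtendable n (0 : Finset (Fin n) → ℝ) := ⟨rfl, by simp [totalExcess]⟩
    have hf0 : f 0 = 0 := by
      have h := hadd 0 0 hM0 hM0
      rw [add_zero] at h
      exact left_eq_add.mp h
    have hMsum : ∀ (T : Finset (Fin n)) (g : Fin n → Finset (Fin n) → ℝ),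
        (∀ j, MinExtendable n (g j)) → MinExtendable n (∑ j ∈ T, g j) := by
      intro T g hg
      induction T using Finset.induction_on with
      | empty => simpa using hM0
      | insert _ _ hjT ih => rw [Finset.sum_insert hjT]; exact hMadd _ _ (hg _) ih
    have hfsum : ∀ (T : Finset (Fin n)) (g : Fin n → Finset (Fin n) → ℝ),
        (∀ j, MinExtendable n (g j)) → f (∑ j ∈ T, g j) = ∑ j ∈ T, f (g j) := by
      intro T g hg
      induction T using Finset.induction_on with
      | empty => simpa using hf0
      | insert _ _ hjT ih =>
          rw [Finset.sum_insert hjT, Finset.sum_insert hjT,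
            hadd _ _ (hg _) (hMsum _ g hg), ih]
    set g : Fin n → Finset (Fin n) → ℝ := fun j S => if j ∈ S then v {j} else 0 with hg
    set a : Finset (Fin n) → ℝ := ∑ j : Fin n, g j with ha
    set w : Finset (Fin n) → ℝ := v - a with hwdef
    have haS : ∀ S, a S = ∑ j ∈ S, v {j} := by
      intro S
      rw [ha, Finset.sum_apply]
      simp only [hg]
      rw [Finset.sum_ite_mem, Finset.univ_inter]
    have hgsing : ∀ j k : Fin n, g j {k} = if j = k then v {j} else 0 := by
      intro j k
      simp [hg, Finset.mem_singleton]
    have hgM : ∀ j, MinExtendable n (g j) := by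
      intro j
      refine ⟨by simp [hg], ?_⟩
      have : totalExcess n (g j) = 0 := by
        simp [totalExcess, hg, hgsing, Finset.sum_ite_eq]
      rw [this]
    have hgΔ : ∀ j, totalExcess n (g j) = 0 := by
      intro j
      simp [totalExcess, hg, hgsing, Finset.sum_ite_eq]
    have hgt : ∀ j S, tildeV n (g j) S = g j S := by
      intro j S
      by_cases hS : S ∈ KminF n
      · exact tildeV_mem hn _ hS
      · rw [tildeV_not_mem hn _ hS, hgΔ, mul_zero, sub_zero]
        have hsum : ∑ k ∈ Finset.univ \ S, g j {k} = if j ∈ S then 0 else v {j} := by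
          simp only [hgsing]
          rw [Finset.sum_ite_eq]
          by_cases hjS : j ∈ S <;> simp [hjS]
        rw [hsum]
        by_cases hjS : j ∈ S <;> simp [hg, hjS]
    have hfg : ∀ j k, k ≠ j → f (g j) k = 0 := by
      intro j k hkj
      apply hnullax (g j) (hgM j) k
      intro S hS
      rw [hgt, hgt]
      have : (j ∈ insert k S) = (j ∈ S) := by
        simp [Finset.mem_insert, hkj.symm]
      simp only [hg, this]
    have hfgj : ∀ j, f (g j) j = v {j} := by
      intro j
      have heq := heff (g j) (hgM j)
      rw [Finset.sum_eq_single j (fun k _ hkj => hfg j k hkj)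
        (fun h => absurd (Finset.mem_univ j) h)] at heq
      rw [heq]
      simp [hg]
    have hfa : ∀ k, f a k = v {k} := by
      intro k
      have h1 : f a = ∑ j : Fin n, f (g j) := by
        rw [ha]; exact hfsum Finset.univ g hgM
      rw [h1, Finset.sum_apply]
      rw [Finset.sum_eq_single k (fun j _ hjk => hfg j k hjk.symm)
        (fun h => absurd (Finset.mem_univ k) h)]
      exact hfgj k
    have hwS : ∀ S, w S = v S - ∑ j ∈ S, v {j} := by
      intro S
      rw [hwdef, Pi.sub_apply, haS]
    have hwsing : ∀ k : Fin n, w {k} = 0 := by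
      intro k
      rw [hwS, Finset.sum_singleton, sub_self]
    have hwΔ : totalExcess n w = totalExcess n v := by
      simp only [totalExcess, hwS, hwsing]
      simp
    have hwM : MinExtendable n w := by
      refine ⟨?_, ?_⟩
      · rw [hwS]; simp [hv.1]
      · rw [hwΔ]; exact hv.2
    have hwsym : ∀ k l : Fin n, f w k = f w l := by
      intro k l
      rcases eq_or_ne k l with rfl | hkl
      · rfl
      apply hsym w hwM k l ∅ (Finset.empty_subset _)
      rw [insert_empty_eq', insert_empty_eq', tildeV_mem hn _ (singleton_mem_KminF k),
        tildeV_mem hn _ (singleton_mem_KminF l), hwsing, hwsing]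
    have hfw : f w i = totalExcess n v / n := by
      have heq := heff w hwM
      rw [Finset.sum_congr rfl (fun k _ => hwsym k i), Finset.sum_const,
        Finset.card_univ, Fintype.card_fin, nsmul_eq_mul] at heq
      rw [hwS Finset.univ] at heq
      rw [eq_div_iff hn', mul_comm, totalExcess]
      exact heq
    have hvaw : a + w = v := by
      funext S
      simp [hwdef, Pi.add_apply, Pi.sub_apply]
    have hMa : MinExtendable n a := hMsum Finset.univ g hgM
    calc f v i = f (a + w) i := by rw [hvaw]
    _ = f a i + f w i := by rw [hadd a w hMa hwM, Pi.add_apply]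
    _ = v {i} + totalExcess n v / n := by rw [hfa, hfw]
    _ = avgValue n v i := rfl
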